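/- arXiv:1601.05006 — 6 statements merged into one kernel-verified Lean document; each statement's English description precedes it below -/
import Mathlib

section
/- Along the flow of the generalized Lotka-Volterra system ẋ_i = x_i(Σ_{j>i} a_j x_j − Σ_{j<i} a_j x_j), the functions v_i = a_1 x_1 + ... + a_i x_i satisfy the decoupled equations v̇_i = v_i(H − v_i), where H = v_n. -/
open Finset Real

/-- partial derivative of `f` in the `i`-th coordinate direction -/
noncomputable def pd {n : ℕ} (i : Fin n) (f : (Fin n → ℝ) → ℝ) (x : Fin n → ℝ) : ℝ :=
  fderiv ℝ f x (Pi.single i 1)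

/-- the quadratic Poisson bracket `{x_i,x_j} = x_i x_j` for `i < j` -/
noncomputable def pb {n : ℕ} (f g : (Fin n → ℝ) → ℝ) (x : Fin n → ℝ) : ℝ :=
  ∑ i : Fin n, ∑ j : Fin n,
    if i < j then x i * x j * (pd i f x * pd j g x - pd j f x * pd i g x) else 0

/-- `v a j x = a_1 x_1 + ⋯ + a_j x_j` (sum of the first `j` terms, 1-based). -/
noncomputable def v {n : ℕ} (a : Fin n → ℝ) (j : ℕ) (x : Fin n → ℝ) : ℝ :=
  ∑ k : Fin n, if (k : ℕ) < j then a k * x k else 0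

/-- right-hand side of the generalized Lotka–Volterra system -/
noncomputable def rhs {n : ℕ} (a : Fin n → ℝ) (x : Fin n → ℝ) (i : Fin n) : ℝ :=
  x i * ((∑ j : Fin n, if i < j then a j * x j else 0)
        - ∑ j : Fin n, if j < i then a j * x j else 0)

/-- `J k = (x_1 x_3 ⋯ x_{2k-1})/(x_2 x_4 ⋯ x_{2k})` (1-based indexing). -/
noncomputable def J {n : ℕ} (k : ℕ) (x : Fin n → ℝ) : ℝ :=
  ∏ m : Fin n, if (m : ℕ) < 2 * k then
    (if (m : ℕ) % 2 = 0 then x m else (x m)⁻¹) else 1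

/-- `I k = (x_{2k+2} x_{2k+4} ⋯ x_n)/(x_{2k+1} x_{2k+3} ⋯ x_{n-1})` (1-based, n even). -/
noncomputable def Ifun {n : ℕ} (k : ℕ) (x : Fin n → ℝ) : ℝ :=
  ∏ m : Fin n, if 2 * k ≤ (m : ℕ) then
    (if (m : ℕ) % 2 = 1 then x m else (x m)⁻¹) else 1

lemma sum_step {n i : ℕ} (hi : i < n) (f : Fin n → ℝ) :
    (∑ k : Fin n, if (k : ℕ) < i + 1 then f k else 0)
      = (∑ k : Fin n, if (k : ℕ) < i then f k else 0) + f ⟨i, hi⟩ := by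
  have h : ∀ k : Fin n, (if (k : ℕ) < i + 1 then f k else 0)
      = (if (k : ℕ) < i then f k else 0) + (if k = ⟨i, hi⟩ then f k else 0) := by
    intro k
    rcases eq_or_ne k ⟨i, hi⟩ with rfl | hk
    · simp
    · have : (k : ℕ) ≠ i := fun h => hk (Fin.ext h)
      by_cases h2 : (k : ℕ) < i
      · simp [h2, hk, Nat.lt_succ_of_lt h2]
      · have : ¬ (k : ℕ) < i + 1 := by omega
        simp [h2, hk, this]
  rw [Finset.sum_congr rfl fun k _ => h k, Finset.sum_add_distrib,
    Finset.sum_ite_eq' Finset.univ ⟨i, hi⟩ f]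
  simp

lemma sum_lt_eq {n : ℕ} (a x : Fin n → ℝ) (k : Fin n) :
    (∑ j : Fin n, if j < k then a j * x j else 0) = v a k x := by
  unfold v
  apply Finset.sum_congr rfl
  intro j _
  simp only [Fin.lt_def]

lemma sum_gt_eq {n : ℕ} (a x : Fin n → ℝ) (k : Fin n) :
    (∑ j : Fin n, if k < j then a j * x j else 0) = v a n x - v a ((k : ℕ) + 1) x := by
  unfold v
  rw [eq_sub_iff_add_eq, ← Finset.sum_add_distrib]
  apply Finset.sum_congr rfl
  intro j _
  have hj : (j : ℕ) < n := j.isLt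
  by_cases h : k < j
  · have : ¬ (j : ℕ) < (k : ℕ) + 1 := by have := Fin.lt_def.mp h; omega
    simp [h, this, hj]
  · have : (j : ℕ) < (k : ℕ) + 1 := by
      have := Fin.lt_def.not.mp h; omega
    simp [h, this, hj]

lemma key_alg {n : ℕ} (a x : Fin n → ℝ) :
    ∀ i ≤ n, (∑ k : Fin n, if (k : ℕ) < i then a k * rhs a x k else 0)
      = v a i x * (v a n x - v a i x) := by
  intro i
  induction i with
  | zero => intro _; simp [v]
  | succ i ih =>
    intro hi
    have hin : i < n := hi
    rw [sum_step hin, ih (le_of_lt hin)]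
    have hv : v a (i + 1) x = v a i x + a ⟨i, hin⟩ * x ⟨i, hin⟩ :=
      sum_step hin _
    have hr : rhs a x ⟨i, hin⟩
        = x ⟨i, hin⟩ * (v a n x - v a (i + 1) x - v a i x) := by
      unfold rhs
      rw [sum_lt_eq, sum_gt_eq]
    rw [hr, hv]
    ring

/-- along the generalized Lotka–Volterra flow,
`v̇_i = v_i (H − v_i)` with `H = v_n`. -/
theorem v_decoupled (n : ℕ) (a : Fin n → ℝ) (x : ℝ → Fin n → ℝ) (t : ℝ)
    (hx : ∀ i : Fin n, HasDerivAt (fun s => x s i) (rhs a (x t) i) t)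
    (i : ℕ) (hi : i ≤ n) :
    HasDerivAt (fun s => v a i (x s))
      (v a i (x t) * (v a n (x t) - v a i (x t))) t := by
  rw [← key_alg a (x t) i hi]
  unfold v
  apply HasDerivAt.fun_sum
  intro k _
  by_cases h : (k : ℕ) < i
  · simp only [h, if_true]
    exact (hx k).const_mul _
  · simp only [h, if_false]
    exact hasDerivAt_const t 0
end

section
/- For the Poisson bracket {x_i,x_j} = x_i x_j (i<j) on R^n, the functions J_k := (x_1 x_3 ⋯ x_{2k−1})/(x_2 x_4 ⋯ x_{2k}), for k = 1,...,⌊n/2⌋, pairwise Poisson commute: {J_k, J_l} = 0 for all k,l. -/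
open Finset Real

/-- the sign coefficient -/
noncomputable def ee (k : ℕ) (i : ℕ) : ℝ :=
  if i < 2 * k then (if i % 2 = 0 then 1 else -1) else 0

lemma pd_J {n : ℕ} (k : ℕ) (i : Fin n) (x : Fin n → ℝ) (hx : ∀ j, x j ≠ 0) :
    pd i (J k) x = ee k i * J k x * (x i)⁻¹ := by
  classical
  set g : Fin n → (Fin n → ℝ) → ℝ := fun m y =>
    if (m : ℕ) < 2 * k then (if (m : ℕ) % 2 = 0 then y m else (y m)⁻¹) else 1 with hg
  set c : Fin n → ℝ := fun m =>
    if (m : ℕ) < 2 * k then (if (m : ℕ) % 2 = 0 then (1:ℝ) else -(x m ^ 2)⁻¹) else 0 with hc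
  have hder : ∀ m : Fin n, HasFDerivAt (g m)
      (c m • (ContinuousLinearMap.proj m : ((Fin n → ℝ) →L[ℝ] ℝ))) x := by
    intro m
    by_cases h1 : (m : ℕ) < 2 * k
    · by_cases h2 : (m : ℕ) % 2 = 0
      · simpa [hg, hc, h1, h2] using
          (hasFDerivAt_apply m x)
      · have h3 : HasFDerivAt (fun y : Fin n → ℝ => (y m)⁻¹)
            ((-(x m ^ 2)⁻¹) • (ContinuousLinearMap.proj m : ((Fin n → ℝ) →L[ℝ] ℝ))) x :=
          (hasDerivAt_inv (hx m)).comp_hasFDerivAt x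
            ((ContinuousLinearMap.proj m : ((Fin n → ℝ) →L[ℝ] ℝ)).hasFDerivAt (x := x))
        have hge : g m = fun y : Fin n → ℝ => (y m)⁻¹ := by
          funext y; simp [hg, h1, h2]
        have hce : c m = -(x m ^ 2)⁻¹ := by simp [hc, h1, h2]
        rw [hge, hce]
        exact h3
    · simpa [hg, hc, h1] using (hasFDerivAt_const (1:ℝ) x)
  have hJ : HasFDerivAt (J (n := n) k)
      (∑ m : Fin n, (∏ j ∈ univ.erase m, g j x) •
        (c m • (ContinuousLinearMap.proj m : ((Fin n → ℝ) →L[ℝ] ℝ)))) x := by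
    have := HasFDerivAt.finset_prod (u := (univ : Finset (Fin n))) (g := g)
      (g' := fun m => c m • (ContinuousLinearMap.proj m : ((Fin n → ℝ) →L[ℝ] ℝ)))
      (fun m _ => hder m)
    exact this
  have hpd : pd i (J k) x = (∏ j ∈ univ.erase i, g j x) * c i := by
    rw [pd, hJ.fderiv]
    simp [ContinuousLinearMap.proj_apply, Pi.single_apply]
  have hJx : J k x = g i x * ∏ j ∈ univ.erase i, g j x :=
    (Finset.mul_prod_erase univ (fun j => g j x) (mem_univ i)).symm
  rw [hpd, hJx, ee, hc, hg]
  by_cases h1 : (i : ℕ) < 2 * k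
  · by_cases h2 : (i : ℕ) % 2 = 0
    · simp only [h1, h2, if_true]
      rw [mul_one, one_mul, mul_comm (x i), mul_assoc, mul_inv_cancel₀ (hx i), mul_one]
    · simp only [h1, h2, if_true, if_false]
      rw [sq, mul_inv]
      ring
  · simp [h1]

lemma alt_sum (k : ℕ) :
    ∑ i ∈ Finset.range (2 * k), (if i % 2 = 0 then (1:ℝ) else -1) = 0 := by
  induction k with
  | zero => simp
  | succ k ih =>
    have : 2 * (k + 1) = (2 * k + 1) + 1 := by ring
    rw [this, Finset.sum_range_succ, Finset.sum_range_succ, ih]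
    have h1 : (2 * k) % 2 = 0 := by omega
    have h2 : (2 * k + 1) % 2 ≠ 0 := by omega
    simp [h1, h2]

lemma ee_sum {n : ℕ} (k : ℕ) (hk : 2 * k ≤ n) :
    ∑ i : Fin n, ee k (i : ℕ) = 0 := by
  rw [Fin.sum_univ_eq_sum_range (fun i => ee k i) n]
  rw [show (Finset.range n) = Finset.range (2*k) ∪ (Finset.range n \ Finset.range (2*k)) by
    rw [Finset.union_sdiff_of_subset (Finset.range_subset_range.2 hk)]]
  rw [Finset.sum_union (Finset.disjoint_sdiff)]
  have h1 : ∑ i ∈ Finset.range (2*k), ee k i = 0 := by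
    rw [← alt_sum k]
    apply Finset.sum_congr rfl
    intro i hi
    simp only [Finset.mem_range] at hi
    simp [ee, hi]
  have h2 : ∑ i ∈ Finset.range n \ Finset.range (2*k), ee k i = 0 := by
    apply Finset.sum_eq_zero
    intro i hi
    simp only [Finset.mem_sdiff, Finset.mem_range, not_lt] at hi
    simp [ee, not_lt.2 hi.2]
  rw [h1, h2, add_zero]

lemma key_le {n : ℕ} (k l : ℕ) (hk : 2 * k ≤ n) (hl : 2 * l ≤ n) (hkl : k ≤ l) :
    ∑ i : Fin n, ∑ j : Fin n,
      (if i < j then ee k i * ee l j - ee k j * ee l i else 0) = 0 := by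
  have hpt : ∀ i j : Fin n,
      (if i < j then ee k (i:ℕ) * ee l (j:ℕ) - ee k (j:ℕ) * ee l (i:ℕ) else 0)
      = (if 2 * k ≤ (j:ℕ) ∧ (j:ℕ) < 2 * l then
          (if (j:ℕ) % 2 = 0 then (1:ℝ) else -1) else 0) * ee k (i:ℕ) := by
    intro i j
    simp only [Fin.lt_def, ee]
    split_ifs <;> first | ring1 | omega
  calc ∑ i : Fin n, ∑ j : Fin n,
        (if i < j then ee k i * ee l j - ee k j * ee l i else 0)
      = ∑ i : Fin n, ∑ j : Fin n,
        ((if 2 * k ≤ (j:ℕ) ∧ (j:ℕ) < 2 * l then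
          (if (j:ℕ) % 2 = 0 then (1:ℝ) else -1) else 0) * ee k (i:ℕ)) := by
        apply Finset.sum_congr rfl; intro i _
        apply Finset.sum_congr rfl; intro j _
        exact hpt i j
    _ = (∑ i : Fin n, ee k (i:ℕ)) * (∑ j : Fin n,
          (if 2 * k ≤ (j:ℕ) ∧ (j:ℕ) < 2 * l then
            (if (j:ℕ) % 2 = 0 then (1:ℝ) else -1) else 0)) := by
        rw [Finset.sum_mul]
        apply Finset.sum_congr rfl; intro i _
        rw [Finset.mul_sum]
        apply Finset.sum_congr rfl; intro j _
        ring
    _ = 0 := by rw [ee_sum k hk, zero_mul]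

lemma key {n : ℕ} (k l : ℕ) (hk : 2 * k ≤ n) (hl : 2 * l ≤ n) :
    ∑ i : Fin n, ∑ j : Fin n,
      (if i < j then ee k i * ee l j - ee k j * ee l i else 0) = 0 := by
  rcases le_total k l with h | h
  · exact key_le k l hk hl h
  · have := key_le l k hl hk h
    have heq : ∀ i j : Fin n,
        (if i < j then ee k (i:ℕ) * ee l (j:ℕ) - ee k (j:ℕ) * ee l (i:ℕ) else 0)
        = -(if i < j then ee l (i:ℕ) * ee k (j:ℕ) - ee l (j:ℕ) * ee k (i:ℕ) else 0) := by
      intro i j; split_ifs <;> ring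
    simp only [heq, Finset.sum_neg_distrib, this, neg_zero]


/-- the functions `J_k` pairwise Poisson-commute. -/
theorem J_involutive (n : ℕ) (k l : ℕ)
    (hk1 : 1 ≤ k) (hk2 : k ≤ n / 2) (hl1 : 1 ≤ l) (hl2 : l ≤ n / 2)
    (x : Fin n → ℝ) (hx : ∀ i, x i ≠ 0) :
    pb (J k) (J l) x = 0 := by
  have hk : 2 * k ≤ n := by omega
  have hl : 2 * l ≤ n := by omega
  rw [pb]
  have hterm : ∀ i j : Fin n,
      (if i < j then x i * x j * (pd i (J k) x * pd j (J l) x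
        - pd j (J k) x * pd i (J l) x) else 0)
      = J k x * J l x *
        (if i < j then ee k (i:ℕ) * ee l (j:ℕ) - ee k (j:ℕ) * ee l (i:ℕ) else 0) := by
    intro i j
    rw [pd_J k i x hx, pd_J k j x hx, pd_J l i x hx, pd_J l j x hx]
    have hxi := hx i
    have hxj := hx j
    split_ifs
    · field_simp
    · ring
  calc ∑ i : Fin n, ∑ j : Fin n,
        (if i < j then x i * x j * (pd i (J k) x * pd j (J l) x
          - pd j (J k) x * pd i (J l) x) else 0)
      = ∑ i : Fin n, ∑ j : Fin n, J k x * J l x *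
          (if i < j then ee k (i:ℕ) * ee l (j:ℕ) - ee k (j:ℕ) * ee l (i:ℕ) else 0) := by
        apply Finset.sum_congr rfl; intro i _
        apply Finset.sum_congr rfl; intro j _
        exact hterm i j
    _ = J k x * J l x * ∑ i : Fin n, ∑ j : Fin n,
          (if i < j then ee k (i:ℕ) * ee l (j:ℕ) - ee k (j:ℕ) * ee l (i:ℕ) else 0) := by
        rw [Finset.mul_sum]
        apply Finset.sum_congr rfl; intro i _
        rw [Finset.mul_sum]
    _ = 0 := by rw [key k l hk hl, mul_zero]
end

section
/- When n is odd, the function C := (x_1 x_3 ⋯ x_n)/(x_2 x_4 ⋯ x_{n−1}) is a Casimir of the Poisson bracket {x_i,x_j} = x_i x_j (i<j) on R^n; that is, {C, x_j} = 0 for all j = 1,...,n. -/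
open Finset Real

/-- `C = (x_1 x_3 ⋯ x_n)/(x_2 x_4 ⋯ x_{n-1})` for odd `n` (1-based indexing). -/
noncomputable def Cfun {n : ℕ} (x : Fin n → ℝ) : ℝ :=
  ∏ m : Fin n, if (m : ℕ) % 2 = 0 then x m else (x m)⁻¹

noncomputable def eps {n : ℕ} (i : Fin n) : ℝ := if (i : ℕ) % 2 = 0 then 1 else -1

noncomputable def e (m : ℕ) : ℝ := if m % 2 = 0 then 1 else -1

theorem Srange (m : ℕ) : ∑ i ∈ Finset.range m, e i = if m % 2 = 0 then 0 else 1 := by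
  induction m with
  | zero => simp
  | succ k ih =>
    rw [Finset.sum_range_succ, ih]
    by_cases hk : k % 2 = 0
    · have h1 : (k + 1) % 2 = 1 := by omega
      simp [e, hk, h1]
    · have h1 : (k + 1) % 2 = 0 := by omega
      have h2 : k % 2 = 1 := by omega
      simp [e, hk, h1, h2]

section main
variable {n : ℕ} (x : Fin n → ℝ)

theorem hC (hx : ∀ i, x i ≠ 0) : HasFDerivAt (Cfun (n := n))
    (∑ i : Fin n, (∏ m ∈ univ.erase i, (if (m : ℕ) % 2 = 0 then x m else (x m)⁻¹)) •
      ((if (i : ℕ) % 2 = 0 then (1:ℝ) else -((x i)^2)⁻¹) • (ContinuousLinearMap.proj i : (Fin n → ℝ) →L[ℝ] ℝ))) x := by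
  have := HasFDerivAt.finset_prod (u := (univ : Finset (Fin n)))
    (g := fun m : Fin n => fun y : Fin n → ℝ => if (m : ℕ) % 2 = 0 then y m else (y m)⁻¹)
    (g' := fun m : Fin n => (if (m : ℕ) % 2 = 0 then (1:ℝ) else -((x m)^2)⁻¹) •
      (ContinuousLinearMap.proj m : (Fin n → ℝ) →L[ℝ] ℝ))
    (x := x) ?_
  · exact this
  · intro m _
    by_cases h : (m : ℕ) % 2 = 0
    · simp only [if_pos h, one_smul]
      exact (ContinuousLinearMap.proj (R := ℝ) (φ := fun _ : Fin n => ℝ) m).hasFDerivAt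
    · simp only [if_neg h]
      have h1 : HasFDerivAt (fun y : Fin n → ℝ => y m)
          (ContinuousLinearMap.proj m : (Fin n → ℝ) →L[ℝ] ℝ) x :=
        (ContinuousLinearMap.proj (R := ℝ) (φ := fun _ : Fin n => ℝ) m).hasFDerivAt
      have h2 := (hasDerivAt_inv (hx m)).comp_hasFDerivAt x h1
      exact h2

theorem key_s8 (hx : ∀ i, x i ≠ 0) (i : Fin n) : x i * pd i Cfun x = eps i * Cfun x := by
  have hd := (hC x hx).fderiv
  rw [pd, hd]
  simp only [ContinuousLinearMap.sum_apply, ContinuousLinearMap.smul_apply,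
    ContinuousLinearMap.proj_apply, smul_eq_mul]
  have hs := Finset.sum_eq_single_of_mem (s := (univ : Finset (Fin n)))
    (f := fun m : Fin n => (∏ k ∈ univ.erase m, if (k : ℕ) % 2 = 0 then x k else (x k)⁻¹) *
      ((if (m : ℕ) % 2 = 0 then (1:ℝ) else -((x m)^2)⁻¹) * (Pi.single i 1 : Fin n → ℝ) m))
    i (mem_univ i) (fun b _ hb => by simp [Pi.single_apply, hb])
  rw [hs]
  · simp only [Pi.single_eq_same, mul_one]
    by_cases h : (i : ℕ) % 2 = 0
    · rw [if_pos h]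
      rw [eps, if_pos h]
      have := Finset.mul_prod_erase univ (fun m : Fin n => if (m : ℕ) % 2 = 0 then x m else (x m)⁻¹) (mem_univ i)
      rw [Cfun, ← this]
      simp only [if_pos h]
      ring
    · rw [if_neg h, eps, if_neg h]
      have := Finset.mul_prod_erase univ (fun m : Fin n => if (m : ℕ) % 2 = 0 then x m else (x m)⁻¹) (mem_univ i)
      rw [Cfun, ← this]
      simp only [if_neg h]
      field_simp [hx i]

theorem pdcoord (i j : Fin n) : pd i (fun y => y j) x = if j = i then 1 else 0 := by
  rw [pd]
  rw [show fderiv ℝ (fun y : Fin n → ℝ => y j) x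
      = (ContinuousLinearMap.proj j : (Fin n → ℝ) →L[ℝ] ℝ) from
    (ContinuousLinearMap.proj (R := ℝ) (φ := fun _ : Fin n => ℝ) j).hasFDerivAt.fderiv]
  simp [Pi.single_apply]

theorem C_is_Casimir' (hn : Odd n) (hx : ∀ i, x i ≠ 0) (j : Fin n) :
    pb Cfun (fun y => y j) x = 0 := by
  have step1 : pb Cfun (fun y => y j) x = ∑ i : Fin n, ∑ k : Fin n,
      ((if k = j then (if i < k then eps i else 0) else 0)
        - (if i = j then (if i < k then eps k else 0) else 0)) * (Cfun x * x j) := by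
    rw [pb]
    refine Finset.sum_congr rfl fun i _ => Finset.sum_congr rfl fun k _ => ?_
    rw [pdcoord, pdcoord]
    by_cases hik : i < k
    · by_cases hkj : k = j
      · by_cases hij : i = j
        · exact absurd hik (by rw [hij, hkj]; exact lt_irrefl j)
        · subst hkj
          simp only [if_pos hik, if_pos rfl, if_neg (fun h : k = i => hij h.symm), mul_one,
            mul_zero, sub_zero, if_neg hij]
          simp only [if_true]
          have K := key_s8 x hx i
          linear_combination x k * K
      · by_cases hij : i = j
        · subst hij
          simp only [if_pos hik, if_pos rfl, if_neg (fun h : i = k => hkj h.symm), mul_one,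
            mul_zero, zero_sub, if_neg hkj, zero_mul]
          simp only [if_true]
          have K := key_s8 x hx k
          linear_combination (-(x i)) * K
        · simp only [if_pos hik, if_neg (fun h : j = k => hkj h.symm),
            if_neg (fun h : j = i => hij h.symm), if_neg hkj, if_neg hij, mul_zero, sub_zero,
            zero_mul, sub_self]
    · simp [hik]
  rw [step1]
  have hsub : ∀ i : Fin n, ∑ k : Fin n,
      ((if k = j then (if i < k then eps i else 0) else 0)
        - (if i = j then (if i < k then eps k else 0) else 0)) * (Cfun x * x j)
      = ((if i < j then eps i else 0)
        - (if i = j then (∑ k : Fin n, if i < k then eps k else 0) else 0)) * (Cfun x * x j) := by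
    intro i
    rw [← Finset.sum_mul]
    congr 1
    rw [Finset.sum_sub_distrib]
    congr 1
    · exact Finset.sum_ite_eq' univ j _ |>.trans (by simp)
    · by_cases h : i = j <;> simp [h]
  rw [Finset.sum_congr rfl (fun i _ => hsub i)]
  rw [← Finset.sum_mul]
  have hmain : (∑ i : Fin n, ((if i < j then eps i else 0)
      - (if i = j then (∑ k : Fin n, if i < k then eps k else 0) else 0))) = 0 := by
    rw [Finset.sum_sub_distrib]
    have h2 : (∑ i : Fin n, (if i = j then (∑ k : Fin n, if i < k then eps k else 0) else 0))
        = ∑ k : Fin n, if j < k then eps k else 0 :=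
      (Finset.sum_ite_eq' univ j _).trans (by simp)
    rw [h2]
    have hjn : (j : ℕ) < n := j.isLt
    have e1 : (∑ i : Fin n, if i < j then eps i else 0)
        = ∑ m ∈ Finset.range (j : ℕ), e m := by
      have a1 : (∑ i : Fin n, if i < j then eps i else 0)
          = ∑ i : Fin n, (fun m : ℕ => if m < (j : ℕ) then e m else 0) (i : ℕ) :=
        Finset.sum_congr rfl fun i _ => by
          show (if i < j then eps i else 0) = if (i : ℕ) < (j : ℕ) then e (i : ℕ) else 0
          by_cases h : (i : ℕ) < (j : ℕ)
          · rw [if_pos h, if_pos (Fin.lt_def.mpr h)]; rfl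
          · rw [if_neg h, if_neg (fun hh => h (Fin.lt_def.mp hh))]
      have a1' := Fin.sum_univ_eq_sum_range (fun m : ℕ => if m < (j : ℕ) then e m else 0) n
      rw [a1, a1', ← Finset.sum_filter]
      congr 1
      ext a
      simp only [Finset.mem_filter, Finset.mem_range]
      omega
    have e2 : (∑ k : Fin n, if j < k then eps k else 0)
        = ∑ m ∈ Finset.Ico ((j : ℕ) + 1) n, e m := by
      have a2 : (∑ k : Fin n, if j < k then eps k else 0)
          = ∑ k : Fin n, (fun m : ℕ => if (j : ℕ) < m then e m else 0) (k : ℕ) :=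
        Finset.sum_congr rfl fun k _ => by
          show (if j < k then eps k else 0) = if (j : ℕ) < (k : ℕ) then e (k : ℕ) else 0
          by_cases h : (j : ℕ) < (k : ℕ)
          · rw [if_pos h, if_pos (Fin.lt_def.mpr h)]; rfl
          · rw [if_neg h, if_neg (fun hh => h (Fin.lt_def.mp hh))]
      have a2' := Fin.sum_univ_eq_sum_range (fun m : ℕ => if (j : ℕ) < m then e m else 0) n
      rw [a2, a2', ← Finset.sum_filter]
      congr 1
      ext a
      simp only [Finset.mem_filter, Finset.mem_range, Finset.mem_Ico]
      omega
    rw [e1, e2]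
    rw [Finset.sum_Ico_eq_sub _ (by omega : (j : ℕ) + 1 ≤ n)]
    rw [Srange, Srange, Srange]
    obtain ⟨t, ht⟩ := hn
    have hn2 : n % 2 = 1 := by omega
    by_cases hj : (j : ℕ) % 2 = 0
    · have hj1 : ((j : ℕ) + 1) % 2 = 1 := by omega
      simp [hj, hj1, hn2]
    · have hj1 : ((j : ℕ) + 1) % 2 = 0 := by omega
      simp [hj, hj1, hn2]
  rw [hmain, zero_mul]

end main

/-- for odd `n`, `C` is a Casimir: `{C, x_j} = 0` for all `j`. -/
theorem C_is_Casimir (n : ℕ) (hn : Odd n)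
    (x : Fin n → ℝ) (hx : ∀ i, x i ≠ 0) (j : Fin n) :
    pb Cfun (fun y => y j) x = 0 := C_is_Casimir' x hn hx j
end

section
/- Let n be even and set I_k := (x_{2k+2} x_{2k+4} ⋯ x_n)/(x_{2k+1} x_{2k+3} ⋯ x_{n−1}). Then for any j: {I_k, x_j} = 0 if j ≤ 2k, and {I_k, x_j} = −I_k x_j if j > 2k; consequently {I_k, v_j} = 0 if j ≤ 2k and {I_k, v_j} = −I_k (v_j − v_{2k}) if j > 2k, where v_j = Σ_{m≤j} a_m x_m. -/
open Finset Real

/- ### auxiliary material -/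

lemma pd_proj {n : ℕ} (i j : Fin n) (x : Fin n → ℝ) :
    pd i (fun y => y j) x = if i = j then 1 else 0 := by
  unfold pd
  rw [(hasFDerivAt_apply j x).fderiv]
  simp [Pi.single_apply, eq_comm]

lemma pd_v {n : ℕ} (a : Fin n → ℝ) (j : ℕ) (i : Fin n) (x : Fin n → ℝ) :
    pd i (v a j) x = if (i:ℕ) < j then a i else 0 := by
  have h : HasFDerivAt (v a j)
      (∑ m : Fin n, (if (m:ℕ) < j then a m else 0) • (ContinuousLinearMap.proj m :
        (Fin n → ℝ) →L[ℝ] ℝ)) x := by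
    have : v a j = fun y => ∑ m : Fin n, (if (m:ℕ) < j then a m else 0) * y m := by
      funext y; unfold v; apply Finset.sum_congr rfl; intro m _; split <;> simp
    rw [this]
    apply HasFDerivAt.fun_sum
    intro m _
    exact (hasFDerivAt_apply m x).const_mul _
  unfold pd
  rw [h.fderiv]
  simp only [ContinuousLinearMap.sum_apply, ContinuousLinearMap.smul_apply,
    ContinuousLinearMap.proj_apply, Pi.single_apply, smul_eq_mul]
  rw [Finset.sum_eq_single i]
  · simp
  · intro b _ hb; simp [hb]
  · simp

/-- the sign of the exponent of `x m` in `Ifun k` -/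
noncomputable def sg (k m : ℕ) : ℝ := if 2*k ≤ m then (if m % 2 = 1 then 1 else -1) else 0

noncomputable def gfac {n : ℕ} (k : ℕ) (m : Fin n) (y : Fin n → ℝ) : ℝ :=
  if 2 * k ≤ (m : ℕ) then (if (m : ℕ) % 2 = 1 then y m else (y m)⁻¹) else 1

noncomputable def dfac {n : ℕ} (k : ℕ) (m : Fin n) (x : Fin n → ℝ) : ℝ :=
  if 2 * k ≤ (m : ℕ) then (if (m : ℕ) % 2 = 1 then 1 else -((x m)^2)⁻¹) else 0

lemma gfac_hasFDerivAt {n : ℕ} (k : ℕ) (m : Fin n) (x : Fin n → ℝ) (hx : ∀ l, x l ≠ 0) :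
    HasFDerivAt (gfac k m)
      ((dfac k m x) • (ContinuousLinearMap.proj m : (Fin n → ℝ) →L[ℝ] ℝ)) x := by
  unfold gfac dfac
  by_cases h1 : 2 * k ≤ (m : ℕ)
  · by_cases h2 : (m : ℕ) % 2 = 1
    · simp only [h1, h2, if_true]
      simpa using hasFDerivAt_apply m x
    · simp only [h1, h2, if_true, if_false]
      have h3 : HasDerivAt (fun t : ℝ => t⁻¹) (-(x m ^ 2)⁻¹) (x m) := hasDerivAt_inv (hx m)
      have h5 : HasFDerivAt (fun y : Fin n → ℝ => y m) (ContinuousLinearMap.proj m : (Fin n → ℝ) →L[ℝ] ℝ) x :=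
        (ContinuousLinearMap.proj m : (Fin n → ℝ) →L[ℝ] ℝ).hasFDerivAt
      have h4 := h3.hasFDerivAt.comp x h5
      refine h4.congr_fderiv ?_
      ext y
      simp [mul_comm]
  · simp only [h1, if_false]
    simpa using hasFDerivAt_const (1:ℝ) x

lemma pd_Ifun {n : ℕ} (k : ℕ) (i : Fin n) (x : Fin n → ℝ) (hx : ∀ m, x m ≠ 0) :
    pd i (Ifun k) x = Ifun k x * sg k i * (x i)⁻¹ := by
  classical
  have hprod : HasFDerivAt (Ifun k : (Fin n → ℝ) → ℝ)
      (∑ m : Fin n, (∏ l ∈ Finset.univ.erase m, gfac k l x) •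
        ((dfac k m x) • (ContinuousLinearMap.proj m : (Fin n → ℝ) →L[ℝ] ℝ))) x := by
    have heq : (Ifun k : (Fin n → ℝ) → ℝ) = (∏ m ∈ Finset.univ, gfac k m ·) := rfl
    rw [heq]
    exact HasFDerivAt.finset_prod (fun m _ => gfac_hasFDerivAt k m x hx)
  unfold pd
  rw [hprod.fderiv]
  simp only [ContinuousLinearMap.sum_apply, ContinuousLinearMap.smul_apply,
    ContinuousLinearMap.proj_apply, Pi.single_apply, smul_eq_mul]
  rw [Finset.sum_eq_single i]
  · have hgi : gfac k i x ≠ 0 := by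
      unfold gfac; split_ifs
      · exact hx i
      · exact inv_ne_zero (hx i)
      · exact one_ne_zero
    have hIfun : Ifun k x = gfac k i x * ∏ l ∈ Finset.univ.erase i, gfac k l x := by
      rw [Finset.mul_prod_erase Finset.univ (fun l => gfac k l x) (Finset.mem_univ i)]
      rfl
    have herase : (∏ l ∈ Finset.univ.erase i, gfac k l x) = Ifun k x / gfac k i x := by
      rw [hIfun]; field_simp
    rw [herase]
    simp only [if_pos rfl, mul_one]
    unfold sg dfac gfac
    by_cases h1 : 2 * k ≤ (i : ℕ)
    · by_cases h2 : (i : ℕ) % 2 = 1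
      · simp only [h1, h2, if_true]
        field_simp
      · simp only [h1, h2, if_true, if_false]
        field_simp
    · simp [h1]
  · intro b _ hb
    simp [hb]
  · simp

lemma Dsum {n : ℕ} (k : ℕ) (T : Fin n → ℝ) :
    ∑ i : Fin n, ∑ j : Fin n, (if i < j then sg k (i:ℕ) * T j - sg k (j:ℕ) * T i else 0)
    = ∑ m : Fin n, T m * ((∑ i : Fin n, if (i:ℕ) < (m:ℕ) then sg k i else 0)
        - ∑ i : Fin n, if (m:ℕ) < (i:ℕ) then sg k i else 0) := by
  have step1 : ∀ i j : Fin n,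
      (if i < j then sg k (i:ℕ) * T j - sg k (j:ℕ) * T i else 0)
      = (if i < j then sg k (i:ℕ) * T j else 0) - (if i < j then sg k (j:ℕ) * T i else 0) := by
    intro i j; split <;> simp
  simp only [step1, Finset.sum_sub_distrib]
  have e1 : ∑ i : Fin n, ∑ j : Fin n, (if i < j then sg k (i:ℕ) * T j else 0)
      = ∑ m : Fin n, T m * ∑ i : Fin n, (if (i:ℕ) < (m:ℕ) then sg k i else 0) := by
    rw [Finset.sum_comm]
    apply Finset.sum_congr rfl
    intro m _
    rw [Finset.mul_sum]
    apply Finset.sum_congr rfl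
    intro i _
    simp only [Fin.lt_def]
    split <;> ring
  have e2 : ∑ i : Fin n, ∑ j : Fin n, (if i < j then sg k (j:ℕ) * T i else 0)
      = ∑ m : Fin n, T m * ∑ i : Fin n, (if (m:ℕ) < (i:ℕ) then sg k i else 0) := by
    apply Finset.sum_congr rfl
    intro m _
    rw [Finset.mul_sum]
    apply Finset.sum_congr rfl
    intro i _
    simp only [Fin.lt_def]
    split <;> ring
  rw [e1, e2, ← Finset.sum_sub_distrib]
  apply Finset.sum_congr rfl
  intro m _
  ring

lemma sgS (k : ℕ) : ∀ j : ℕ, ∑ i ∈ Finset.range j, sg k i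
    = if j ≤ 2*k then 0 else (if j % 2 = 1 then -1 else 0) := by
  intro j
  induction j with
  | zero => simp
  | succ j ih =>
    rw [Finset.sum_range_succ, ih]
    unfold sg
    split_ifs
    all_goals try omega
    all_goals norm_num

lemma rangeCut (k j n : ℕ) (hj : j ≤ n) :
    (∑ m ∈ Finset.range n, if m < j then sg k m else 0) = ∑ m ∈ Finset.range j, sg k m := by
  rw [← Finset.sum_subset (Finset.range_subset_range.mpr hj)
    (fun m _ hm => by rw [Finset.mem_range] at hm; rw [if_neg hm])]
  apply Finset.sum_congr rfl
  intro m hm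
  rw [Finset.mem_range] at hm
  rw [if_pos hm]

lemma finA {n : ℕ} (k j : ℕ) (hj : j ≤ n) :
    (∑ i : Fin n, if (i:ℕ) < j then sg k i else 0) = ∑ i ∈ Finset.range j, sg k i := by
  rw [Fin.sum_univ_eq_sum_range (fun m => if m < j then sg k m else 0) n]
  exact rangeCut k j n hj

lemma finB {n : ℕ} (k j : ℕ) (hj : j < n) :
    (∑ i : Fin n, if j < (i:ℕ) then sg k i else 0)
    = (∑ i ∈ Finset.range n, sg k i) - ∑ i ∈ Finset.range (j+1), sg k i := by
  rw [Fin.sum_univ_eq_sum_range (fun m => if j < m then sg k m else 0) n,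
    ← rangeCut k (j+1) n hj, ← Finset.sum_sub_distrib]
  apply Finset.sum_congr rfl
  intro m _
  by_cases h : j < m
  · rw [if_pos h, if_neg (by omega : ¬ m < j+1)]; ring
  · rw [if_neg h, if_pos (by omega : m < j+1)]; ring

lemma ABval {n : ℕ} (k : ℕ) (hn : Even n) (j : Fin n) :
    (∑ i : Fin n, if (i:ℕ) < (j:ℕ) then sg k i else 0)
    - (∑ i : Fin n, if (j:ℕ) < (i:ℕ) then sg k i else 0)
    = if (j:ℕ) < 2*k then 0 else -1 := by
  rw [finA k j (le_of_lt j.isLt), finB k j j.isLt, sgS, sgS, sgS]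
  have hn2 : n % 2 = 0 := Nat.even_iff.mp hn
  have hj2 := Nat.mod_two_eq_zero_or_one (j:ℕ)
  split_ifs
  all_goals try omega
  all_goals norm_num

/-- the main bracket computation, for any second argument with known partials -/
lemma pb_I {n : ℕ} (k : ℕ) (hn : Even n) (x : Fin n → ℝ) (hx : ∀ m, x m ≠ 0)
    (g : (Fin n → ℝ) → ℝ) (G : Fin n → ℝ) (hG : ∀ m, pd m g x = G m) :
    pb (Ifun k) g x
    = ∑ m : Fin n, Ifun k x * (x m * G m) * (if (m:ℕ) < 2*k then 0 else -1) := by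
  unfold pb
  have step : ∀ i j : Fin n,
      (if i < j then x i * x j * (pd i (Ifun k) x * pd j g x - pd j (Ifun k) x * pd i g x) else 0)
      = Ifun k x * (if i < j then sg k (i:ℕ) * (x j * G j) - sg k (j:ℕ) * (x i * G i) else 0) := by
    intro i j
    rw [hG i, hG j, pd_Ifun k i x hx, pd_Ifun k j x hx]
    split
    · have hi := hx i
      have hj := hx j
      field_simp
    · ring
  simp only [step]
  simp only [← Finset.mul_sum]
  rw [Dsum k (fun m => x m * G m)]
  rw [Finset.mul_sum]
  apply Finset.sum_congr rfl
  intro m _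
  rw [ABval k hn m]
  ring

/-- brackets of `I_k` with the coordinates and with the `v_j`. -/
theorem I_brackets (n : ℕ) (hn : Even n) (a : Fin n → ℝ) (k : ℕ)
    (hk1 : 1 ≤ k) (hk2 : k ≤ n / 2)
    (x : Fin n → ℝ) (hx : ∀ i, x i ≠ 0) :
    (∀ j : Fin n, pb (Ifun k) (fun y => y j) x =
      if (j : ℕ) < 2 * k then 0 else -(Ifun k x * x j)) ∧
    (∀ j : ℕ, j ≤ n → pb (Ifun k) (v a j) x =
      if j ≤ 2 * k then 0 else -(Ifun k x * (v a j x - v a (2 * k) x))) := by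
  constructor
  · intro j
    rw [pb_I k hn x hx (fun y => y j) (fun m => if m = j then 1 else 0)
      (fun m => pd_proj m j x)]
    rw [Finset.sum_eq_single j]
    · simp only [if_pos rfl, mul_one]
      by_cases h : (j:ℕ) < 2*k
      · simp [h]
      · simp [h]
    · intro b _ hb
      simp [hb]
    · simp
  · intro j hj
    rw [pb_I k hn x hx (v a j) (fun m => if (m:ℕ) < j then a m else 0)
      (fun m => pd_v a j m x)]
    by_cases hjk : j ≤ 2*k
    · rw [if_pos hjk]
      apply Finset.sum_eq_zero
      intro m _
      by_cases h1 : (m:ℕ) < j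
      · rw [if_pos h1, if_pos (by omega : (m:ℕ) < 2*k)]
        ring
      · rw [if_neg h1]
        ring
    · rw [if_neg hjk]
      unfold v
      rw [← Finset.sum_sub_distrib, Finset.mul_sum, ← Finset.sum_neg_distrib]
      apply Finset.sum_congr rfl
      intro m _
      split_ifs
      all_goals try omega
      all_goals ring
end

section
/- Suppose a_{ℓ+1} ≠ 0 and a_1 = ... = a_ℓ = 0. For i ≤ ℓ, the function K_i := (H − a_{ℓ+1} x_{ℓ+1}) x_i / x_{ℓ+1} is a first integral of the generalized Lotka-Volterra system ẋ_i = x_i(H − v_i − v_{i−1}): its time derivative along the flow vanishes. -/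
open Finset Real

/-- for `i ≤ ℓ` (1-based), `K_i = (H − a_{ℓ+1} x_{ℓ+1}) x_i / x_{ℓ+1}`
is a first integral of the generalized Lotka–Volterra system
(0-based: index `ℓ` plays the rôle of `ℓ+1`). -/
theorem K_first_integral_A (n : ℕ) (a : Fin n → ℝ) (ℓ : ℕ) (hℓ : ℓ < n)
    (hzero : ∀ m : Fin n, (m : ℕ) < ℓ → a m = 0)
    (hne : a ⟨ℓ, hℓ⟩ ≠ 0)
    (i : Fin n) (hi : (i : ℕ) < ℓ)
    (x : ℝ → Fin n → ℝ) (t : ℝ)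
    (hx : ∀ j : Fin n, HasDerivAt (fun s => x s j) (rhs a (x t) j) t)
    (hxl : x t ⟨ℓ, hℓ⟩ ≠ 0) :
    HasDerivAt (fun s =>
      ((∑ m, a m * x s m) - a ⟨ℓ, hℓ⟩ * x s ⟨ℓ, hℓ⟩) * x s i / x s ⟨ℓ, hℓ⟩) 0 t := by
  set L : Fin n := ⟨ℓ, hℓ⟩ with hLdef
  set y : Fin n → ℝ := x t with hy
  -- H is a first integral
  have hS0 : ∑ m, a m * rhs a y m = 0 := by
    have h1 : ∀ m : Fin n, a m * rhs a y m =
        (∑ j, if m < j then (a m * y m) * (a j * y j) else 0)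
        - ∑ j, if j < m then (a j * y j) * (a m * y m) else 0 := by
      intro m
      simp only [rhs, Finset.mul_sum, mul_ite, mul_zero, mul_sub]
      rw [← Finset.sum_sub_distrib, ← Finset.sum_sub_distrib]
      exact Finset.sum_congr rfl fun j _ => by split <;> split <;> ring
    calc ∑ m, a m * rhs a y m
        = (∑ m, ∑ j, if m < j then (a m * y m) * (a j * y j) else 0)
          - ∑ m, ∑ j, if j < m then (a j * y j) * (a m * y m) else 0 := by
          rw [← Finset.sum_sub_distrib]; exact Finset.sum_congr rfl fun m _ => h1 m
      _ = 0 := by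
          rw [Finset.sum_comm (s := Finset.univ) (t := Finset.univ)
            (f := fun m j => if j < m then (a j * y j) * (a m * y m) else 0)]
          exact sub_self _
  have hri : rhs a y i = y i * ∑ m, a m * y m := by
    rw [rhs]
    have h2 : (∑ j, if j < i then a j * y j else 0) = 0 :=
      Finset.sum_eq_zero fun j _ => by
        split
        · next h => rw [hzero j (lt_trans h hi), zero_mul]
        · rfl
    have h3 : (∑ j, if i < j then a j * y j else 0) = ∑ m, a m * y m :=
      Finset.sum_congr rfl fun j _ => by
        split
        · rfl
        · next h => rw [hzero j (lt_of_le_of_lt (not_lt.mp h) hi), zero_mul]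
    rw [h2, h3, sub_zero]
  have hrL : rhs a y L = y L * ((∑ m, a m * y m) - a L * y L) := by
    rw [rhs]
    have h2 : (∑ j, if j < L then a j * y j else 0) = 0 :=
      Finset.sum_eq_zero fun j _ => by
        split
        · next h => rw [hzero j h, zero_mul]
        · rfl
    have h3 : (∑ j, if L < j then a j * y j else 0) = (∑ m, a m * y m) - a L * y L := by
      have h4 : ∀ j : Fin n, (if L < j then a j * y j else 0)
          = a j * y j - (if j = L then a j * y j else 0) := by
        intro j
        rcases lt_trichotomy L j with h | h | h
        · rw [if_pos h, if_neg (ne_of_gt h), sub_zero]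
        · subst h
          rw [if_neg (lt_irrefl L), if_pos rfl, sub_self]
        · rw [if_neg (asymm h), if_neg (ne_of_lt h), hzero j h, zero_mul, sub_zero]
      rw [Finset.sum_congr rfl fun j _ => h4 j, Finset.sum_sub_distrib,
        Finset.sum_ite_eq' Finset.univ L (fun j => a j * y j), if_pos (Finset.mem_univ L)]
    rw [h2, h3, sub_zero]
  -- derivatives
  have hH : HasDerivAt (fun s => ∑ m, a m * x s m) 0 t := by
    have := HasDerivAt.fun_sum (fun m (_ : m ∈ Finset.univ) => (hx m).const_mul (a m))
    rwa [hS0] at this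
  have hG : HasDerivAt (fun s => (∑ m, a m * x s m) - a L * x s L)
      (0 - a L * rhs a y L) t := hH.sub ((hx L).const_mul (a L))
  have hnum : HasDerivAt (fun s => ((∑ m, a m * x s m) - a L * x s L) * x s i)
      ((0 - a L * rhs a y L) * y i + ((∑ m, a m * y m) - a L * y L) * rhs a y i) t :=
    hG.mul (hx i)
  have hdiv := hnum.div (hx L) hxl
  have hval : (((0 - a L * rhs a y L) * y i + ((∑ m, a m * y m) - a L * y L) * rhs a y i)
      * y L - ((∑ m, a m * y m) - a L * y L) * y i * rhs a y L) / y L ^ 2 = 0 := by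
    rw [hri, hrL]
    field_simp
    ring
  rw [hval] at hdiv
  exact hdiv
end

section
/- Suppose a_{ℓ+1} ≠ 0, a_1 = ... = a_ℓ = 0, and let i > ℓ+1 with a_i = 0. Then K_i := (H − a_{ℓ+1} x_{ℓ+1}) v_i² / (x_i x_{ℓ+1}) is a first integral of the system ẋ_j = x_j(H − v_j − v_{j−1}), v̇_j = v_j(H − v_j). -/
open Finset Real

lemma v_zero' {n : ℕ} (a X : Fin n → ℝ) : v a 0 X = 0 := by simp [v]

lemma v_succ' {n : ℕ} (a X : Fin n → ℝ) (k : Fin n) :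
    v a ((k : ℕ) + 1) X = v a (k : ℕ) X + a k * X k := by
  have h : ∀ m : Fin n, (if (m:ℕ) < (k:ℕ)+1 then a m * X m else 0)
      = (if (m:ℕ) < (k:ℕ) then a m * X m else 0) + (if m = k then a m * X m else 0) := by
    intro m
    rcases lt_trichotomy (m:ℕ) (k:ℕ) with h|h|h
    · rw [if_pos (by omega), if_pos h, if_neg (by simp [Fin.ext_iff]; omega), add_zero]
    · rw [if_pos (by omega), if_neg (by omega), if_pos (Fin.ext h), zero_add]
    · rw [if_neg (by omega), if_neg (by omega), if_neg (by simp [Fin.ext_iff]; omega), add_zero]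
  unfold v
  simp only [h, Finset.sum_add_distrib, Finset.sum_ite_eq' Finset.univ k,
    Finset.mem_univ, if_true]

lemma sum_lt' {n : ℕ} (a X : Fin n → ℝ) (j : Fin n) :
    (∑ m : Fin n, if m < j then a m * X m else 0) = v a (j:ℕ) X := by
  unfold v
  exact Finset.sum_congr rfl fun m _ => if_congr Fin.lt_def rfl rfl

lemma sum_gt' {n : ℕ} (a X : Fin n → ℝ) (j : Fin n) :
    (∑ m : Fin n, if j < m then a m * X m else 0)
      = (∑ m : Fin n, a m * X m) - v a ((j:ℕ)+1) X := by
  have hsum : (∑ m : Fin n, a m * X m)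
      = v a ((j:ℕ)+1) X + (∑ m : Fin n, if j < m then a m * X m else 0) := by
    unfold v
    rw [← Finset.sum_add_distrib]
    refine Finset.sum_congr rfl fun m _ => ?_
    rcases le_or_gt ((m:ℕ)) ((j:ℕ)) with h|h
    · rw [if_pos (by omega), if_neg (by rw [Fin.lt_def]; omega), add_zero]
    · rw [if_neg (by omega), if_pos (Fin.lt_def.mpr h), zero_add]
  linarith

lemma rhs_eq' {n : ℕ} (a X : Fin n → ℝ) (j : Fin n) :
    rhs a X j = X j * ((∑ m : Fin n, a m * X m) - v a ((j:ℕ)+1) X - v a (j:ℕ) X) := by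
  unfold rhs
  rw [sum_gt', sum_lt']

lemma tel' {n : ℕ} (a X : Fin n → ℝ) (j : ℕ) (hj : j ≤ n) :
    (∑ k : Fin n, if (k:ℕ) < j then a k * rhs a X k else 0)
      = v a j X * ((∑ m : Fin n, a m * X m) - v a j X) := by
  set H := ∑ m : Fin n, a m * X m with hH
  set g : ℕ → ℝ := fun m => H * v a m X - (v a m X)^2 with hg
  have hterm : ∀ k : Fin n, a k * rhs a X k = g ((k:ℕ)+1) - g (k:ℕ) := by
    intro k
    simp only [hg]
    rw [rhs_eq', v_succ' a X k]
    ring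
  have h1 : (∑ k : Fin n, if (k:ℕ) < j then a k * rhs a X k else 0)
      = ∑ k ∈ Finset.range n, (if k < j then g (k+1) - g k else 0) := by
    rw [← Fin.sum_univ_eq_sum_range (fun k => if k < j then g (k+1) - g k else 0) n]
    refine Finset.sum_congr rfl fun k _ => ?_
    by_cases h : (k:ℕ) < j
    · rw [if_pos h, if_pos h, hterm k]
    · rw [if_neg h, if_neg h]
  have h2 : ∑ k ∈ Finset.range n, (if k < j then g (k+1) - g k else 0)
      = ∑ k ∈ Finset.range j, (g (k+1) - g k) := by
    rw [← Finset.sum_subset (Finset.range_subset_range.2 hj)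
      (fun k _ hk => if_neg (by simpa using hk))]
    exact Finset.sum_congr rfl fun k hk => if_pos (Finset.mem_range.1 hk)
  rw [h1, h2, Finset.sum_range_sub g j]
  simp only [hg, v_zero']
  ring


/-- for `i > ℓ+1` (1-based) with `a_i = 0`,
`K_i = (H − a_{ℓ+1} x_{ℓ+1}) v_i² / (x_i x_{ℓ+1})` is a first integral
(0-based: index `ℓ` plays the rôle of `ℓ+1`). -/
theorem K_first_integral_C (n : ℕ) (a : Fin n → ℝ) (ℓ : ℕ) (hℓ : ℓ < n)
    (hzero : ∀ m : Fin n, (m : ℕ) < ℓ → a m = 0)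
    (hne : a ⟨ℓ, hℓ⟩ ≠ 0)
    (i : Fin n) (hi : ℓ < (i : ℕ)) (hai : a i = 0)
    (x : ℝ → Fin n → ℝ) (t : ℝ)
    (hx : ∀ j : Fin n, HasDerivAt (fun s => x s j) (rhs a (x t) j) t)
    (hxl : x t ⟨ℓ, hℓ⟩ ≠ 0) (hxi : x t i ≠ 0) :
    HasDerivAt (fun s =>
      ((∑ m, a m * x s m) - a ⟨ℓ, hℓ⟩ * x s ⟨ℓ, hℓ⟩) * (v a ((i : ℕ) + 1) (x s)) ^ 2
        / (x s i * x s ⟨ℓ, hℓ⟩)) 0 t := by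
  set L : Fin n := ⟨ℓ, hℓ⟩ with hLdef
  -- basic values at time t
  have hvl0 : v a ℓ (x t) = 0 := by
    unfold v
    refine Finset.sum_eq_zero fun k _ => ?_
    by_cases h : (k:ℕ) < ℓ
    · rw [if_pos h, hzero k h, zero_mul]
    · rw [if_neg h]
  have hvl1 : v a (ℓ + 1) (x t) = a L * x t L := by
    have := v_succ' a (x t) L
    simp only [hLdef] at this ⊢
    rw [this, hvl0, zero_add]
  have hvi : v a ((i:ℕ)) (x t) = v a ((i:ℕ) + 1) (x t) := by
    rw [v_succ' a (x t) i, hai, zero_mul, add_zero]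
  have hvtop : v a n (x t) = ∑ m : Fin n, a m * x t m := by
    unfold v
    exact Finset.sum_congr rfl fun k _ => if_pos k.isLt
  -- derivative facts
  have hc1 : (∑ m : Fin n, a m * rhs a (x t) m) = 0 := by
    have h := tel' a (x t) n le_rfl
    have h2 : (∑ k : Fin n, if (k:ℕ) < n then a k * rhs a (x t) k else 0)
        = ∑ m : Fin n, a m * rhs a (x t) m :=
      Finset.sum_congr rfl fun k _ => if_pos k.isLt
    rw [h2, hvtop] at h
    rw [h]; ring
  have hc2 : (∑ k : Fin n, if (k:ℕ) < (i:ℕ)+1 then a k * rhs a (x t) k else 0)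
      = v a ((i:ℕ)+1) (x t) * ((∑ m : Fin n, a m * x t m) - v a ((i:ℕ)+1) (x t)) :=
    tel' a (x t) ((i:ℕ)+1) i.isLt
  have hc3 : rhs a (x t) i
      = x t i * ((∑ m : Fin n, a m * x t m) - v a ((i:ℕ)+1) (x t) - v a ((i:ℕ)+1) (x t)) := by
    rw [rhs_eq', hvi]
  have hc4 : rhs a (x t) L
      = x t L * ((∑ m : Fin n, a m * x t m) - a L * x t L) := by
    have := rhs_eq' a (x t) L
    simp only [hLdef] at this
    rw [this]
    simp only [hLdef] at hvl1 hvl0 ⊢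
    rw [hvl1, hvl0, sub_zero]
  -- build the derivative
  have hDH : HasDerivAt (fun s => ∑ m : Fin n, a m * x s m)
      (∑ m : Fin n, a m * rhs a (x t) m) t :=
    HasDerivAt.fun_sum fun m _ => (hx m).const_mul (a m)
  have hDu : HasDerivAt (fun s => a L * x s L) (a L * rhs a (x t) L) t :=
    (hx L).const_mul _
  have hDw : HasDerivAt (fun s => v a ((i:ℕ)+1) (x s))
      (∑ k : Fin n, if (k:ℕ) < (i:ℕ)+1 then a k * rhs a (x t) k else 0) t := by
    unfold v
    refine HasDerivAt.fun_sum fun k _ => ?_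
    by_cases h : (k:ℕ) < (i:ℕ)+1
    · simpa only [if_pos h] using (hx k).const_mul (a k)
    · simpa only [if_neg h] using hasDerivAt_const t (0:ℝ)
  have hD0 : x t i * x t L ≠ 0 := mul_ne_zero hxi hxl
  have big := ((hDH.fun_sub hDu).fun_mul (hDw.fun_pow 2)).fun_div ((hx i).fun_mul (hx L)) hD0
  refine big.congr_deriv ?_
  symm
  rw [hc1, hc2, hc3, hc4]
  rw [eq_comm, div_eq_zero_iff]
  left
  ring
end
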